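/- For any Borel probability measures μ, ν on ℝ^d, the Poincaré constant is subadditive under convolution: C_p(μ ⋆ ν) ≤ C_p(μ) + C_p(ν). -/

import Mathlib

open MeasureTheory ProbabilityTheory ENNReal

section Helpers
variable {α : Type*} [MeasurableSpace α] {μ : Measure α} {g : α → ℝ}

lemma lintegral_nnnorm_sq_eq (g : α → ℝ) (μ : Measure α) :
    ∫⁻ a, (‖g a‖₊ : ℝ≥0∞) ^ 2 ∂μ = eLpNorm g 2 μ ^ 2 := by
  rw [eLpNorm_eq_lintegral_rpow_enorm_toReal two_ne_zero ENNReal.ofNat_ne_top]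
  rw [← ENNReal.rpow_natCast _ 2, ← ENNReal.rpow_mul]
  norm_num
  rfl

lemma memℒp_two_of_lintegral_sq_ne_top (hsm : AEStronglyMeasurable g μ)
    (h : ∫⁻ a, (‖g a‖₊ : ℝ≥0∞) ^ 2 ∂μ ≠ ⊤) : MemLp g 2 μ := by
  refine ⟨hsm, ?_⟩
  rw [lt_top_iff_ne_top]
  intro htop
  rw [lintegral_nnnorm_sq_eq, htop] at h
  simp at h

lemma MeasureTheory.MemLp.lintegral_sq_ne_top (hg : MemLp g 2 μ) :
    ∫⁻ a, (‖g a‖₊ : ℝ≥0∞) ^ 2 ∂μ ≠ ⊤ := by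
  rw [lintegral_nnnorm_sq_eq]
  exact ENNReal.pow_ne_top hg.2.ne

lemma integral_sq_eq_toReal (hg : MemLp g 2 μ) :
    ∫ a, (g a) ^ 2 ∂μ = (∫⁻ a, (‖g a‖₊ : ℝ≥0∞) ^ 2 ∂μ).toReal := by
  rw [integral_eq_lintegral_of_nonneg_ae (Filter.Eventually.of_forall fun a => sq_nonneg _)
    ((hg.1.mul hg.1).congr (Filter.Eventually.of_forall fun a => by simp [pow_two]))]
  congr 1
  refine lintegral_congr fun a => ?_
  rw [← enorm_eq_nnnorm, Real.enorm_eq_ofReal_abs, ← ENNReal.ofReal_pow (abs_nonneg _), sq_abs]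

variable [IsProbabilityMeasure μ]

lemma sq_integral_le (hg : MemLp g 2 μ) :
    (∫ a, g a ∂μ) ^ 2 ≤ ∫ a, (g a) ^ 2 ∂μ := by
  have h := variance_nonneg g μ
  rw [variance_eq_sub hg] at h
  simpa using le_of_sub_nonneg h

lemma integral_sq_sub_const (hg : MemLp g 2 μ) (c : ℝ) :
    ∫ a, (g a - c) ^ 2 ∂μ = variance g μ + (∫ a, g a ∂μ - c) ^ 2 := by
  set m := ∫ a, g a ∂μ with hm
  have hgm : MemLp (fun a => g a - m) 2 μ := hg.sub (memLp_const m)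
  have h1 : Integrable (fun a => (g a - m) ^ 2) μ := hgm.integrable_sq
  have h2 : Integrable (fun a => g a - m) μ := hgm.integrable one_le_two
  have hvar : variance g μ = ∫ a, (g a - m) ^ 2 ∂μ := by
    exact variance_eq_integral hg.aemeasurable
  have hzero : ∫ a, (g a - m) ∂μ = 0 := by
    rw [integral_sub (hg.integrable one_le_two) (integrable_const m)]
    simp [hm]
  have key : ∀ a, (g a - c) ^ 2 = (g a - m) ^ 2 + ((2 * (m - c)) * (g a - m) + (m - c) ^ 2) := by
    intro a; ring
  calc ∫ a, (g a - c) ^ 2 ∂μ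
      = ∫ a, ((g a - m) ^ 2 + ((2 * (m - c)) * (g a - m) + (m - c) ^ 2)) ∂μ := by
        simp_rw [key]
    _ = (∫ a, (g a - m) ^ 2 ∂μ) + ∫ a, ((2 * (m - c)) * (g a - m) + (m - c) ^ 2) ∂μ := by
        have hI2 : Integrable (fun a => (2 * (m - c)) * (g a - m) + (m - c) ^ 2) μ :=
          (h2.const_mul _).add (integrable_const _)
        rw [integral_add h1 hI2]
    _ = variance g μ + (m - c) ^ 2 := by
        rw [integral_add (h2.const_mul _) (integrable_const _), integral_const_mul, hzero, hvar]
        simp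

end Helpers

section EfronStein

variable {X Y : Type*} [MeasurableSpace X] [MeasurableSpace Y]
  {μ : Measure X} {ν : Measure Y} [IsProbabilityMeasure μ] [IsProbabilityMeasure ν]

/-- Two-variable Efron–Stein type inequality for `evariance`. -/
lemma evariance_prod_le {F : X × Y → ℝ} (hF : StronglyMeasurable F) :
    evariance F (μ.prod ν) ≤
      (∫⁻ y, evariance (fun x => F (x, y)) μ ∂ν) +
        ∫⁻ x, evariance (fun y => F (x, y)) ν ∂μ := by
  set A := ∫⁻ y, evariance (fun x => F (x, y)) μ ∂ν with hA_def
  set B := ∫⁻ x, evariance (fun y => F (x, y)) ν ∂μ with hB_def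
  by_cases hA : A = ⊤
  · rw [hA, top_add]; exact le_top
  by_cases hB : B = ⊤
  · rw [hB, add_top]; exact le_top
  have mF : Measurable F := hF.measurable
  have hslice1 : ∀ y, AEStronglyMeasurable (fun x => F (x, y)) μ :=
    fun y => (hF.comp_measurable measurable_prodMk_right).aestronglyMeasurable
  have hslice2 : ∀ x, AEStronglyMeasurable (fun y => F (x, y)) ν :=
    fun x => (hF.comp_measurable measurable_prodMk_left).aestronglyMeasurable
  set m₁ : Y → ℝ := fun y => ∫ x, F (x, y) ∂μ with hm₁_def
  set m₂ : X → ℝ := fun x => ∫ y, F (x, y) ∂ν with hm₂_def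
  have hm₁ : StronglyMeasurable m₁ := hF.integral_prod_left'
  have hm₂ : StronglyMeasurable m₂ := hF.integral_prod_right'
  have hV₁eq : ∀ y, evariance (fun x => F (x, y)) μ
      = ∫⁻ x, (‖F (x, y) - m₁ y‖₊ : ℝ≥0∞) ^ 2 ∂μ := fun y => rfl
  have hV₂eq : ∀ x, evariance (fun y => F (x, y)) ν
      = ∫⁻ y, (‖F (x, y) - m₂ x‖₊ : ℝ≥0∞) ^ 2 ∂ν := fun x => rfl
  have mint1 : Measurable fun p : X × Y => (‖F p - m₁ p.2‖₊ : ℝ≥0∞) ^ 2 :=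
    ((mF.sub (hm₁.measurable.comp measurable_snd)).enorm).pow_const 2
  have mV₁ : Measurable fun y => evariance (fun x => F (x, y)) μ := by
    simp_rw [hV₁eq]
    exact Measurable.lintegral_prod_left' mint1
  have hAlt : ∀ᵐ y ∂ν, evariance (fun x => F (x, y)) μ < ⊤ :=
    ae_lt_top mV₁ hA
  have hmem1 : ∀ᵐ y ∂ν, MemLp (fun x => F (x, y)) 2 μ :=
    hAlt.mono fun y hy => (evariance_lt_top_iff_memLp (hslice1 y)).1 hy
  set H : X × Y → ℝ := fun p => F p - m₂ p.1 with hH_def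
  have hHsm : StronglyMeasurable H := hF.sub (hm₂.comp_measurable measurable_fst)
  have mHsq : Measurable fun p : X × Y => (‖H p‖₊ : ℝ≥0∞) ^ 2 :=
    (hHsm.measurable.enorm).pow_const 2
  have hH2 : ∫⁻ p, (‖H p‖₊ : ℝ≥0∞) ^ 2 ∂(μ.prod ν) = B := by
    rw [lintegral_prod _ mHsq.aemeasurable, hB_def]
    exact lintegral_congr fun x => (hV₂eq x).symm
  have hHmem : MemLp H 2 (μ.prod ν) :=
    memℒp_two_of_lintegral_sq_ne_top hHsm.aestronglyMeasurable (by rw [hH2]; exact hB)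
  have hHslice : ∀ᵐ y ∂ν, MemLp (fun x => H (x, y)) 2 μ := by
    have h1 : ∫⁻ y, ∫⁻ x, (‖H (x, y)‖₊ : ℝ≥0∞) ^ 2 ∂μ ∂ν ≠ ⊤ := by
      rw [← lintegral_prod_symm' _ mHsq, hH2]; exact hB
    have h2 := ae_lt_top (Measurable.lintegral_prod_left' mHsq) h1
    refine h2.mono fun y hy => memℒp_two_of_lintegral_sq_ne_top
      ((hHsm.comp_measurable measurable_prodMk_right).aestronglyMeasurable) hy.ne
  haveI : (MeasureTheory.ae ν).NeBot := ae_neBot.2 (IsProbabilityMeasure.ne_zero ν)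
  obtain ⟨y₀, hy₀F, hy₀H⟩ := (hmem1.and hHslice).exists
  have hm₂mem : MemLp m₂ 2 μ := by
    have : m₂ = fun x => F (x, y₀) - H (x, y₀) := by
      funext x; simp [hH_def]
    rw [this]
    exact hy₀F.sub hy₀H
  have hcomp : MemLp (fun p : X × Y => m₂ p.1) 2 (μ.prod ν) := by
    refine memℒp_two_of_lintegral_sq_ne_top
      ((hm₂.comp_measurable measurable_fst).aestronglyMeasurable) ?_
    have mm : Measurable fun p : X × Y => (‖m₂ p.1‖₊ : ℝ≥0∞) ^ 2 :=
      ((hm₂.measurable.comp measurable_fst).enorm).pow_const 2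
    rw [lintegral_prod (fun p : X × Y => (‖m₂ p.1‖₊ : ℝ≥0∞) ^ 2) mm.aemeasurable]
    simpa [lintegral_const] using hm₂mem.lintegral_sq_ne_top
  have hF2 : MemLp F 2 (μ.prod ν) := by
    have : F = fun p => H p + m₂ p.1 := by funext p; simp [hH_def]
    rw [this]
    exact hHmem.add hcomp
  set c := ∫ p, F p ∂(μ.prod ν) with hc_def
  have hF1 : Integrable F (μ.prod ν) := hF2.integrable one_le_two
  have hFc2 : MemLp (fun p => F p - c) 2 (μ.prod ν) := hF2.sub (memLp_const c)
  have hint : Integrable (fun p => (F p - c) ^ 2) (μ.prod ν) := hFc2.integrable_sq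
  have hχint : Integrable (fun y => ∫ x, (F (x, y) - c) ^ 2 ∂μ) ν := hint.integral_prod_right
  have hφint : Integrable (fun y => variance (fun x => F (x, y)) μ) ν := by
    have := integrable_toReal_of_lintegral_ne_top mV₁.aemeasurable hA
    exact this
  have hφeq : ∫ y, variance (fun x => F (x, y)) μ ∂ν = A.toReal :=
    integral_toReal mV₁.aemeasurable hAlt
  have hae : ∀ᵐ y ∂ν, ∫ x, (F (x, y) - c) ^ 2 ∂μ
      = variance (fun x => F (x, y)) μ + (m₁ y - c) ^ 2 :=
    hmem1.mono fun y hy => integral_sq_sub_const hy c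
  have hψint : Integrable (fun y => (m₁ y - c) ^ 2) ν := by
    refine (hχint.sub hφint).congr (hae.mono fun y hy => ?_)
    simp [hy]
  have hcm₂ : c = ∫ x, m₂ x ∂μ := by
    rw [hc_def, integral_prod _ hF1]
  have hHsqint : Integrable (fun p => (H p) ^ 2) (μ.prod ν) := hHmem.integrable_sq
  have haem : ∀ᵐ y ∂ν, (m₁ y - c) ^ 2 ≤ ∫ x, (H (x, y)) ^ 2 ∂μ := by
    refine (hmem1.and hHslice).mono fun y hy => ?_
    obtain ⟨hyF, hyH⟩ := hy
    have hsub : ∫ x, H (x, y) ∂μ = m₁ y - c := by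
      rw [hcm₂, hH_def]
      exact integral_sub (hyF.integrable one_le_two) (hm₂mem.integrable one_le_two)
    calc (m₁ y - c) ^ 2 = (∫ x, H (x, y) ∂μ) ^ 2 := by rw [hsub]
      _ ≤ ∫ x, (H (x, y)) ^ 2 ∂μ := sq_integral_le hyH
  have hψle : ∫ y, (m₁ y - c) ^ 2 ∂ν ≤ B.toReal := by
    have h1 : ∫ y, (m₁ y - c) ^ 2 ∂ν ≤ ∫ y, ∫ x, (H (x, y)) ^ 2 ∂μ ∂ν :=
      integral_mono_ae hψint hHsqint.integral_prod_right haem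
    have h2 : ∫ y, ∫ x, (H (x, y)) ^ 2 ∂μ ∂ν = ∫ p, (H p) ^ 2 ∂(μ.prod ν) :=
      (integral_prod_symm _ hHsqint).symm
    have h3 : ∫ p, (H p) ^ 2 ∂(μ.prod ν) = B.toReal := by
      rw [integral_sq_eq_toReal hHmem, hH2]
    rw [h2, h3] at h1
    exact h1
  have hvarle : variance F (μ.prod ν) ≤ A.toReal + B.toReal := by
    have hveq : variance F (μ.prod ν) = ∫ p, (F p - c) ^ 2 ∂(μ.prod ν) := by
      refine (variance_eq_integral hF2.aemeasurable).trans ?_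
      exact integral_congr_ae (Filter.Eventually.of_forall fun p => by simp [hc_def])
    have hFub : ∫ p, (F p - c) ^ 2 ∂(μ.prod ν) = ∫ y, ∫ x, (F (x, y) - c) ^ 2 ∂μ ∂ν :=
      integral_prod_symm _ hint
    have hsplit : ∫ y, ∫ x, (F (x, y) - c) ^ 2 ∂μ ∂ν
        = (∫ y, variance (fun x => F (x, y)) μ ∂ν) + ∫ y, (m₁ y - c) ^ 2 ∂ν := by
      rw [← integral_add hφint hψint]
      exact integral_congr_ae hae
    rw [hveq, hFub, hsplit, hφeq]
    linarith [hψle]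
  calc evariance F (μ.prod ν) = ENNReal.ofReal (variance F (μ.prod ν)) :=
        (hF2.ofReal_variance_eq).symm
    _ ≤ ENNReal.ofReal (A.toReal + B.toReal) := ENNReal.ofReal_le_ofReal hvarle
    _ = ENNReal.ofReal A.toReal + ENNReal.ofReal B.toReal :=
        ENNReal.ofReal_add toReal_nonneg toReal_nonneg
    _ = A + B := by rw [ofReal_toReal hA, ofReal_toReal hB]

end EfronStein

section Gradient
variable {E : Type*} [NormedAddCommGroup E] [InnerProductSpace ℝ E] [CompleteSpace E]

omit [CompleteSpace E] in
lemma fderiv_comp_add_right' (f : E → ℝ) (y x : E) :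
    fderiv ℝ (fun z => f (z + y)) x = fderiv ℝ f (x + y) := by
  by_cases h : DifferentiableAt ℝ f (x + y)
  · have h1 : HasFDerivAt (fun z => f (z + y)) (fderiv ℝ f (x + y)) x := by
      have h2 : HasFDerivAt (fun z : E => z + y) (ContinuousLinearMap.id ℝ E) x :=
        (hasFDerivAt_id x).add_const y
      exact (h.hasFDerivAt.comp x h2).congr_fderiv (by simp)
    exact h1.fderiv
  · have h' : ¬ DifferentiableAt ℝ (fun z => f (z + y)) x := by
      intro hc
      apply h
      have h3 : DifferentiableAt ℝ (fun w : E => w - y) (x + y) := differentiableAt_id.sub_const y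
      have h4 : DifferentiableAt ℝ ((fun z : E => f (z + y)) ∘ (fun w : E => w - y)) (x + y) :=
        DifferentiableAt.comp _ (by simpa [add_sub_cancel_right] using hc) h3
      have h5 : ((fun z : E => f (z + y)) ∘ (fun w : E => w - y)) = f := by
        funext w; simp
      rwa [h5] at h4
    rw [fderiv_zero_of_not_differentiableAt h, fderiv_zero_of_not_differentiableAt h']

lemma gradient_comp_add_right (f : E → ℝ) (y x : E) :
    gradient (fun z => f (z + y)) x = gradient f (x + y) := by
  unfold gradient
  rw [fderiv_comp_add_right' f y x]

lemma gradient_comp_add_left (f : E → ℝ) (y x : E) :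
    gradient (fun z => f (y + z)) x = gradient f (y + x) := by
  have h : (fun z : E => f (y + z)) = fun z => f (z + y) := by
    funext z; rw [add_comm]
  rw [h, gradient_comp_add_right f y x, add_comm]

end Gradient

section ConvPoincare
variable {d : ℕ}

local notation "E" => EuclideanSpace ℝ (Fin d)

lemma conv_poincare_member {μ ν : Measure (EuclideanSpace ℝ (Fin d))}
    [IsProbabilityMeasure μ] [IsProbabilityMeasure ν] {C₁ C₂ : ℝ≥0∞}
    (hC₁ : ∀ f : EuclideanSpace ℝ (Fin d) → ℝ, LocallyLipschitz f →
      evariance f μ ≤ C₁ * ∫⁻ x, ‖gradient f x‖₊ ^ 2 ∂μ)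
    (hC₂ : ∀ f : EuclideanSpace ℝ (Fin d) → ℝ, LocallyLipschitz f →
      evariance f ν ≤ C₂ * ∫⁻ x, ‖gradient f x‖₊ ^ 2 ∂ν)
    (f : EuclideanSpace ℝ (Fin d) → ℝ) (hf : LocallyLipschitz f) :
    evariance f (μ ∗ ν) ≤ (C₁ + C₂) * ∫⁻ x, ‖gradient f x‖₊ ^ 2 ∂(μ ∗ ν) := by
  have hfc : Continuous f := hf.continuous
  set F : E × E → ℝ := fun p => f (p.1 + p.2) with hF_def
  have hFc : Continuous F := hfc.comp continuous_add
  have hFsm : StronglyMeasurable F := hFc.stronglyMeasurable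
  have hadd : Measurable fun p : E × E => p.1 + p.2 := measurable_add
  have hconv : μ ∗ ν = (μ.prod ν).map (fun p : E × E => p.1 + p.2) := rfl
  have mgradE : Measurable fun z : E => gradient f z := by
    have h1 : Measurable (fderiv ℝ f) := measurable_fderiv ℝ f
    have h2 : Continuous fun L : E →L[ℝ] ℝ => (InnerProductSpace.toDual ℝ E).symm L :=
      (InnerProductSpace.toDual ℝ E).symm.continuous
    exact h2.measurable.comp h1
  have mgrad2 : Measurable fun p : E × E => (‖gradient f (p.1 + p.2)‖₊ : ℝ≥0∞) ^ 2 :=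
    ((mgradE.comp hadd).enorm).pow_const 2
  have hev : evariance f (μ ∗ ν) = evariance F (μ.prod ν) := by
    rw [hconv]
    simp only [evariance]
    have hmg : Measurable fun z : E =>
        (‖f z - ∫ z, f z ∂((μ.prod ν).map (fun p : E × E => p.1 + p.2))‖ₑ) ^ 2 :=
      ((hfc.measurable.sub measurable_const).enorm).pow_const 2
    rw [lintegral_map hmg hadd, integral_map hadd.aemeasurable hfc.aestronglyMeasurable]
  have hI : ∫⁻ x, (‖gradient f x‖₊ : ℝ≥0∞) ^ 2 ∂(μ ∗ ν)
      = ∫⁻ p, (‖gradient f (p.1 + p.2)‖₊ : ℝ≥0∞) ^ 2 ∂(μ.prod ν) := by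
    rw [hconv, lintegral_map (f := fun x : E => (‖gradient f x‖₊ : ℝ≥0∞) ^ 2) (mgradE.enorm.pow_const 2) hadd]
  have h1 : ∀ y : E, evariance (fun x => F (x, y)) μ
      ≤ C₁ * ∫⁻ x, (‖gradient f (x + y)‖₊ : ℝ≥0∞) ^ 2 ∂μ := by
    intro y
    have hLL : LocallyLipschitz fun x : E => f (x + y) :=
      hf.comp ((isometry_add_right y).lipschitz.locallyLipschitz)
    have := hC₁ _ hLL
    simp only [hF_def]
    simpa only [gradient_comp_add_right f y] using this
  have h2 : ∀ x : E, evariance (fun y => F (x, y)) ν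
      ≤ C₂ * ∫⁻ y, (‖gradient f (x + y)‖₊ : ℝ≥0∞) ^ 2 ∂ν := by
    intro x
    have hLL : LocallyLipschitz fun y : E => f (x + y) :=
      hf.comp ((isometry_add_left x).lipschitz.locallyLipschitz)
    have := hC₂ _ hLL
    simp only [hF_def]
    simpa only [gradient_comp_add_left f x] using this
  have mG₁ : Measurable fun y : E => ∫⁻ x, (‖gradient f (x + y)‖₊ : ℝ≥0∞) ^ 2 ∂μ :=
    Measurable.lintegral_prod_left' mgrad2
  have mG₂ : Measurable fun x : E => ∫⁻ y, (‖gradient f (x + y)‖₊ : ℝ≥0∞) ^ 2 ∂ν :=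
    Measurable.lintegral_prod_right' mgrad2
  calc evariance f (μ ∗ ν) = evariance F (μ.prod ν) := hev
    _ ≤ (∫⁻ y, evariance (fun x => F (x, y)) μ ∂ν)
        + ∫⁻ x, evariance (fun y => F (x, y)) ν ∂μ := evariance_prod_le hFsm
    _ ≤ (∫⁻ y, C₁ * ∫⁻ x, (‖gradient f (x + y)‖₊ : ℝ≥0∞) ^ 2 ∂μ ∂ν)
        + ∫⁻ x, C₂ * ∫⁻ y, (‖gradient f (x + y)‖₊ : ℝ≥0∞) ^ 2 ∂ν ∂μ :=
      add_le_add (lintegral_mono h1) (lintegral_mono h2)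
    _ = C₁ * (∫⁻ y, ∫⁻ x, (‖gradient f (x + y)‖₊ : ℝ≥0∞) ^ 2 ∂μ ∂ν)
        + C₂ * ∫⁻ x, ∫⁻ y, (‖gradient f (x + y)‖₊ : ℝ≥0∞) ^ 2 ∂ν ∂μ := by
      rw [lintegral_const_mul C₁ mG₁, lintegral_const_mul C₂ mG₂]
    _ = C₁ * (∫⁻ p, (‖gradient f (p.1 + p.2)‖₊ : ℝ≥0∞) ^ 2 ∂(μ.prod ν))
        + C₂ * ∫⁻ p, (‖gradient f (p.1 + p.2)‖₊ : ℝ≥0∞) ^ 2 ∂(μ.prod ν) := by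
      rw [← lintegral_prod_symm' _ mgrad2, ← lintegral_prod _ mgrad2.aemeasurable]
    _ = (C₁ + C₂) * ∫⁻ x, (‖gradient f x‖₊ : ℝ≥0∞) ^ 2 ∂(μ ∗ ν) := by
      rw [hI, add_mul]

end ConvPoincare

/-- The Poincaré constant of a Borel probability measure on `ℝ^d`: the smallest constant `C`
such that `Var_μ(f) ≤ C ∫ |∇f|² dμ` for all locally Lipschitz `f : ℝ^d → ℝ`
(`+∞` if no finite constant works). -/
noncomputable def poincareConst {d : ℕ} (μ : Measure (EuclideanSpace ℝ (Fin d))) : ℝ≥0∞ :=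
  sInf {C : ℝ≥0∞ | ∀ f : EuclideanSpace ℝ (Fin d) → ℝ, LocallyLipschitz f →
    evariance f μ ≤ C * ∫⁻ x, ‖gradient f x‖₊ ^ 2 ∂μ}

/-- Subadditivity of the Poincaré constant under convolution:
`C_p(μ ⋆ ν) ≤ C_p(μ) + C_p(ν)`. -/
theorem poincareConst_conv_le {d : ℕ} (μ ν : Measure (EuclideanSpace ℝ (Fin d)))
    [IsProbabilityMeasure μ] [IsProbabilityMeasure ν] :
    poincareConst (μ ∗ ν) ≤ poincareConst μ + poincareConst ν := by
  set Sμ := {C : ℝ≥0∞ | ∀ f : EuclideanSpace ℝ (Fin d) → ℝ, LocallyLipschitz f →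
    evariance f μ ≤ C * ∫⁻ x, ‖gradient f x‖₊ ^ 2 ∂μ} with hSμ
  set Sν := {C : ℝ≥0∞ | ∀ f : EuclideanSpace ℝ (Fin d) → ℝ, LocallyLipschitz f →
    evariance f ν ≤ C * ∫⁻ x, ‖gradient f x‖₊ ^ 2 ∂ν} with hSν
  have hadd1 : poincareConst μ + poincareConst ν
      = ⨅ (a : Sμ), ⨅ (b : Sν), ((a : ℝ≥0∞) + b) := by
    rw [poincareConst, poincareConst, ← hSμ, ← hSν, sInf_eq_iInf' Sμ, sInf_eq_iInf' Sν,
      ENNReal.iInf_add]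
    exact iInf_congr fun a => ENNReal.add_iInf
  rw [hadd1]
  refine le_iInf fun a => le_iInf fun b => ?_
  exact sInf_le fun f hf => conv_poincare_member a.2 b.2 f hf
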